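/- (Lemma 4b) Under the hypotheses of Lemma 4 (G a DAG, T_s a DFS arborescence rooted at s, z a proper tree-ancestor of w in T_s with tree path Z = (z = w'_0, ..., w'_{k-1} = w), s ∉ J(z, w'_i) for all internal i, and s ∈ J(z,w)), for every pair of vertices u ∈ T_z \ T_w and v ∈ T_w, we have s ∈ J(u,v). -/

import Mathlib

variable {V : Type*}

/-- A directed graph (given as a relation) is acyclic: no nontrivial closed directed walk. -/
def Acyclic (G : V → V → Prop) : Prop := Irreflexive (Relation.TransGen G)

/-- `l` is a directed path in `G` from `a` to `b`: consecutive vertices are joined by arcs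
of `G` and no vertex is repeated. -/
def IsDipath (G : V → V → Prop) (l : List V) (a b : V) : Prop :=
  l.Chain' G ∧ l.head? = some a ∧ l.getLast? = some b ∧ l.Nodup

/-- The internal vertices of a path (all vertices except the two endpoints). -/
def internalVerts (l : List V) : List V := l.tail.dropLast

/-- `s` is a junction of the pair of distinct vertices `u, v` in `G`: there are directed
paths from `s` to `u` and from `s` to `v` sharing no vertex other than `s`. -/
def IsJunction (G : V → V → Prop) (s u v : V) : Prop :=
  u ≠ v ∧ ∃ p q : List V, IsDipath G p s u ∧ IsDipath G q s v ∧
    ∀ x, x ∈ p → x ∈ q → x = s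

/-- `z` is the lowest common ancestor of `u` and `v` in the tree (arborescence) `T`:
a common ancestor that is a descendant of every common ancestor. -/
def IsTreeLCA (T : V → V → Prop) (u v z : V) : Prop :=
  Relation.ReflTransGen T z u ∧ Relation.ReflTransGen T z v ∧
    ∀ y, Relation.ReflTransGen T y u → Relation.ReflTransGen T y v →
      Relation.ReflTransGen T y z

/-- `s` is a lowest common ancestor of `u, v` in the DAG `G`: a junction of `u, v` such
that there is no directed path from `s` to any other junction of `u, v`. -/
def IsLCA (G : V → V → Prop) (s u v : V) : Prop :=
  IsJunction G s u v ∧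
    ∀ s', s' ≠ s → IsJunction G s' u v → ¬ Relation.TransGen G s s'

/-- A DFS arborescence of `G` rooted at `s`, spanning all descendants of `s`, together
with its post-order numbering and the standard structural properties of depth-first
search: tree arcs are graph arcs, the root has no parent, parents are unique, every
`G`-descendant of `s` is in the tree, `post` is injective on the tree, `post` strictly
decreases from a vertex to its proper tree descendants, the post-order numbers of each
subtree form a contiguous interval, and every graph arc between tree vertices is a
tree/forward arc, a back arc, or a (post-order decreasing) cross arc. -/
structure DFSArborescence (G : V → V → Prop) (s : V) where
  T : V → V → Prop
  post : V → ℕ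
  sub : ∀ ⦃a b⦄, T a b → G a b
  root_no_parent : ∀ a, ¬ T a s
  unique_parent : ∀ ⦃a b c⦄, T a b → T c b → a = c
  verts_reach : ∀ ⦃a b⦄, T a b → Relation.ReflTransGen T s a
  spans : ∀ ⦃v⦄, Relation.ReflTransGen G s v → Relation.ReflTransGen T s v
  post_inj : ∀ ⦃u v⦄, Relation.ReflTransGen T s u → Relation.ReflTransGen T s v →
      post u = post v → u = v
  post_desc : ∀ ⦃u v⦄, Relation.ReflTransGen T s u → Relation.TransGen T u v →
      post v < post u
  post_contig : ∀ ⦃u v x⦄, Relation.ReflTransGen T s u → Relation.ReflTransGen T u v →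
      Relation.ReflTransGen T s x → post v ≤ post x → post x ≤ post u →
      Relation.ReflTransGen T u x
  arc_classify : ∀ ⦃u v⦄, G u v → Relation.ReflTransGen T s u →
      Relation.ReflTransGen T s v →
      Relation.ReflTransGen T u v ∨ Relation.ReflTransGen T v u ∨ post v < post u

namespace Aux
open Relation List

lemma head_reach {G : V → V → Prop} :
    ∀ {l : List V} {x a : V}, l.Chain' G → x ∈ l → l.head? = some a →
      ReflTransGen G a x := by
  intro l
  induction l with
  | nil => intro x a _ hx; simp at hx
  | cons c t ih =>
    intro x a hc hx ha
    simp at ha; subst ha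
    rcases List.mem_cons.mp hx with rfl | hx
    · exact ReflTransGen.refl
    · match t, hx with
      | d :: t', hx =>
        have h1 : G c d := (List.isChain_cons_cons.mp hc).1
        exact ReflTransGen.head h1 (ih (List.isChain_cons_cons.mp hc).2 hx rfl)

lemma last_reach {G : V → V → Prop} :
    ∀ {l : List V} {x b : V}, l.Chain' G → x ∈ l → l.getLast? = some b →
      ReflTransGen G x b := by
  intro l
  induction l with
  | nil => intro x b _ hx; simp at hx
  | cons c t ih =>
    intro x b hc hx hb
    match t with
    | [] =>
      simp at hx hb; subst hx; subst hb; exact ReflTransGen.refl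
    | d :: t' =>
      have h1 : G c d := (List.isChain_cons_cons.mp hc).1
      have hb' : (d :: t').getLast? = some b := by
        rwa [List.getLast?_cons_cons] at hb
      rcases List.mem_cons.mp hx with rfl | hx
      · exact ReflTransGen.head h1 (ih (List.isChain_cons_cons.mp hc).2 List.mem_cons_self hb')
      · exact ih (List.isChain_cons_cons.mp hc).2 hx hb'

lemma dipath_mem_reach {G : V → V → Prop} {l : List V} {a b x : V}
    (h : IsDipath G l a b) (hx : x ∈ l) :
    ReflTransGen G a x ∧ ReflTransGen G x b :=
  ⟨head_reach h.1 hx h.2.1, last_reach h.1 hx h.2.2.1⟩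

lemma dipath_prefix {G : V → V → Prop} {q : List V} {s w x : V}
    (h : IsDipath G q s w) (hx : x ∈ q) :
    ∃ p, IsDipath G p s x ∧ (∀ y ∈ p, y ∈ q) ∧
      (∀ y ∈ p, ReflTransGen G y x) ∧ (x ≠ w → w ∉ p) := by
  obtain ⟨q1, q2, rfl⟩ := List.append_of_mem hx
  have hpre : q1 ++ [x] <+: q1 ++ x :: q2 := ⟨q2, by simp⟩
  refine ⟨q1 ++ [x], ?_, fun y hy => hpre.sublist.mem hy, ?_, ?_⟩
  · obtain ⟨hc, hh, hl, hn⟩ := h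
    refine ⟨hc.prefix hpre, ?_, List.getLast?_concat (l := q1), hn.sublist hpre.sublist⟩
    cases q1 with
    | nil => simpa using hh
    | cons a t => simpa using hh
  · intro y hy
    exact last_reach (h.1.prefix hpre) hy (List.getLast?_concat (l := q1))
  · intro hxw hwp
    rcases List.mem_append.mp hwp with hw1 | hw2
    · have hlast : (q1 ++ x :: q2).getLast? = (x :: q2).getLast? :=
        List.getLast?_append_of_ne_nil q1 (by simp)
      have hw' : w ∈ x :: q2 := by
        rw [h.2.2.1] at hlast
        exact List.mem_of_mem_getLast? (by simp [hlast.symm])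
      exact (List.disjoint_of_nodup_append h.2.2.2) hw1 hw'
    · simp at hw2; exact hxw hw2.symm

lemma dipath_append {G : V → V → Prop} {p r : List V} {a b c : V}
    (hp : IsDipath G p a b) (hr : IsDipath G r b c)
    (hd : ∀ y ∈ p, y ∈ r → y = b) :
    IsDipath G (p ++ r.tail) a c ∧ ∀ y ∈ p ++ r.tail, y ∈ p ∨ y ∈ r := by
  obtain ⟨hcp, hhp, hlp, hnp⟩ := hp
  obtain ⟨hcr, hhr, hlr, hnr⟩ := hr
  cases r with
  | nil => simp at hhr
  | cons b0 r' =>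
    simp only [List.head?_cons, Option.some.injEq] at hhr
    subst hhr
    simp only [List.tail_cons]
    have hglue := List.isChain_cons.mp hcr
    constructor
    · refine ⟨hcp.append hglue.2 ?_, ?_, ?_, ?_⟩
      · intro x hx y hy
        rw [hlp] at hx; simp at hx; subst hx
        exact hglue.1 y hy
      · cases p with
        | nil => simp at hhp
        | cons a0 p1 => simpa using hhp
      · cases r' with
        | nil =>
          simp only [List.getLast?_singleton, Option.some.injEq] at hlr
          subst hlr; simpa using hlp
        | cons d r'' =>
          rw [List.getLast?_append_of_ne_nil p (by simp)]
          rwa [List.getLast?_cons_cons] at hlr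
      · refine List.nodup_append.mpr ⟨hnp, (List.nodup_cons.mp hnr).2, ?_⟩
        intro y hy y' hy' hyy; subst hyy
        have := hd y hy (List.mem_cons_of_mem _ hy')
        subst this
        exact (List.nodup_cons.mp hnr).1 hy'
    · intro y hy
      rcases List.mem_append.mp hy with h | h
      · exact Or.inl h
      · exact Or.inr (List.mem_cons_of_mem _ h)

lemma tree_path {G : V → V → Prop} (hG : Acyclic G) {T : V → V → Prop}
    (hsub : ∀ ⦃a b⦄, T a b → G a b) {a b : V} (h : Relation.ReflTransGen T a b) :
    ∃ l, IsDipath T l a b ∧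
      ∀ y ∈ l, Relation.ReflTransGen T a y ∧ Relation.ReflTransGen T y b := by
  induction h using Relation.ReflTransGen.head_induction_on with
  | refl =>
    refine ⟨[b], ⟨List.isChain_singleton b, rfl, rfl, List.nodup_singleton b⟩, ?_⟩
    intro y hy; simp at hy; subst hy
    exact ⟨Relation.ReflTransGen.refl, Relation.ReflTransGen.refl⟩
  | head hac hbc ih =>
    rename_i a c
    obtain ⟨l, hl, hmem⟩ := ih
    have hna : a ∉ l := by
      intro hal
      have hca : Relation.ReflTransGen G c a :=
        Relation.ReflTransGen.mono (fun x y hh => hsub hh) _ _ (hmem a hal).1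
      exact hG a (Relation.TransGen.head' (hsub hac) hca)
    have hlne : l ≠ [] := by rintro rfl; simp [IsDipath] at hl
    refine ⟨a :: l, ⟨?_, rfl, ?_, List.nodup_cons.mpr ⟨hna, hl.2.2.2⟩⟩, ?_⟩
    · refine List.isChain_cons.mpr ⟨?_, hl.1⟩
      intro y hy
      rw [hl.2.1] at hy
      simp at hy; subst hy; exact hac
    · cases l with
      | nil => simp at hlne
      | cons d t => rw [List.getLast?_cons_cons]; exact hl.2.2.1
    · intro y hy
      rcases List.mem_cons.mp hy with rfl | hy
      · exact ⟨Relation.ReflTransGen.refl, Relation.ReflTransGen.head hac hbc⟩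
      · exact ⟨Relation.ReflTransGen.head hac (hmem y hy).1, (hmem y hy).2⟩

end Aux

/-- Lemma 4b: under the hypotheses of Lemma 4, `s ∈ J(u,v)` for every
`u ∈ T_z \\ T_w` and `v ∈ T_w`. -/
theorem stmt11 (G : V → V → Prop) (hG : Acyclic G) (s : V) (A : DFSArborescence G s)
    (s1 : V) (h1 : A.T s s1) (z w : V)
    (hz : Relation.ReflTransGen A.T s1 z) (hw : Relation.ReflTransGen A.T s1 w)
    (Z : List V) (hZ : IsDipath A.T Z z w) (hlen : 2 ≤ Z.length)
    (hnot : ∀ i (hi : i < Z.length), 0 < i → i < Z.length - 1 →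
      ¬ IsJunction G s z (Z.get ⟨i, hi⟩))
    (hJ : IsJunction G s z w) :
    ∀ u v, Relation.ReflTransGen A.T z u → ¬ Relation.ReflTransGen A.T w u →
      Relation.ReflTransGen A.T w v → IsJunction G s u v := by
  intro u v hzu hwu hwv
  obtain ⟨hzw_ne, P, Q, hP, hQ, hPQ⟩ := hJ
  have tg : ∀ {a b : V}, Relation.ReflTransGen A.T a b → Relation.ReflTransGen G a b :=
    fun h => Relation.ReflTransGen.mono (fun x y hh => A.sub hh) _ _ h
  have cyc : ∀ {a b : V}, Relation.ReflTransGen G a b → Relation.ReflTransGen G b a →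
      a ≠ b → False := by
    intro a b h1 h2 hne
    rcases h1.cases_head with rfl | ⟨c, hac, hcb⟩
    · exact hne rfl
    · exact hG a ((Relation.TransGen.head' hac hcb).trans_left h2)
  -- basic membership facts
  have hZz : z ∈ Z := List.mem_of_mem_head? (by simp [hZ.2.1])
  have hZw : w ∈ Z := List.mem_of_mem_getLast? (by simp [hZ.2.2.1])
  have hZmem : ∀ y ∈ Z, Relation.ReflTransGen A.T z y ∧ Relation.ReflTransGen A.T y w :=
    fun y hy => Aux.dipath_mem_reach hZ hy
  have hzw : Relation.ReflTransGen A.T z w := (hZmem z hZz).2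
  have hsz : Relation.TransGen A.T s z := Relation.TransGen.head' h1 hz
  have hszne : s ≠ z := by
    rintro rfl
    exact hG s (Relation.TransGen.mono (fun x y hh => A.sub hh) _ _ hsz)
  have hsP : s ∈ P := List.mem_of_mem_head? (by simp [hP.2.1])
  have hzP : z ∈ P := List.mem_of_mem_getLast? (by simp [hP.2.2.1])
  have hPmem : ∀ y ∈ P, Relation.ReflTransGen G s y ∧ Relation.ReflTransGen G y z :=
    fun y hy => Aux.dipath_mem_reach hP hy
  have hQmem : ∀ y ∈ Q, Relation.ReflTransGen G s y ∧ Relation.ReflTransGen G y w :=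
    fun y hy => Aux.dipath_mem_reach hQ hy
  have FP : ∀ y ∈ P, Relation.ReflTransGen A.T z y → y = z := by
    intro y hy hzy
    by_contra hne
    exact cyc (tg hzy) (hPmem y hy).2 (fun h => hne h.symm)
  have FQ1 : ∀ y ∈ Q, Relation.ReflTransGen A.T w y → y = w := by
    intro y hy hwy
    by_contra hne
    exact cyc (tg hwy) (hQmem y hy).2 (fun h => hne h.symm)
  have hzTw : ¬ Relation.ReflTransGen A.T w z := fun h => cyc (tg hzw) (tg h) hzw_ne
  -- internal vertices of Z are non-junctions
  have hnot' : ∀ y ∈ Z, y ≠ z → y ≠ w → ¬ IsJunction G s z y := by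
    intro y hy hyz hyw
    obtain ⟨n, hn⟩ := List.mem_iff_get.mp hy
    have hget : Z[n.1] = y := hn
    have hh0 : Z[0]? = some z := by rw [← List.head?_eq_getElem?]; exact hZ.2.1
    have hhl : Z[Z.length - 1]? = some w := by
      rw [← List.getLast?_eq_getElem?]; exact hZ.2.2.1
    have h0 : 0 < n.1 := by
      rcases Nat.eq_zero_or_pos n.1 with h0 | h0
      · exfalso
        apply hyz
        have hsome : Z[n.1]? = some y := by rw [List.getElem?_eq_getElem n.2, hget]
        rw [h0, hh0] at hsome
        exact (Option.some.inj hsome).symm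
      · exact h0
    have hlt : n.1 < Z.length - 1 := by
      rcases Nat.lt_or_ge n.1 (Z.length - 1) with h | h
      · exact h
      · exfalso
        apply hyw
        have hni : n.1 = Z.length - 1 := by have := n.2; omega
        have hsome : Z[n.1]? = some y := by rw [List.getElem?_eq_getElem n.2, hget]
        rw [hni, hhl] at hsome
        exact (Option.some.inj hsome).symm
    have := hnot n.1 n.2 h0 hlt
    rwa [show Z.get ⟨n.1, n.2⟩ = y from hn] at this
  have FQZ : ∀ y ∈ Q, y ∈ Z → y = w := by
    intro y hyQ hyZ
    by_contra hyw
    have hyz : y ≠ z := by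
      rintro rfl
      exact hszne (hPQ y hzP hyQ).symm
    obtain ⟨p, hp, hpQ, _, _⟩ := Aux.dipath_prefix hQ hyQ
    exact hnot' y hyZ hyz hyw
      ⟨fun h => hyz h.symm, P, p, hP, hp, fun x hxP hxp => hPQ x hxP (hpQ x hxp)⟩
  -- tree paths
  obtain ⟨R, hR, hRmem⟩ := Aux.tree_path hG A.sub hzu
  obtain ⟨S, hS, hSmem⟩ := Aux.tree_path hG A.sub hwv
  have hRG : IsDipath G R z u := ⟨hR.1.imp (fun a b h => A.sub h), hR.2.1, hR.2.2.1, hR.2.2.2⟩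
  have hSG : IsDipath G S w v := ⟨hS.1.imp (fun a b h => A.sub h), hS.2.1, hS.2.2.1, hS.2.2.2⟩
  have hRw : ∀ y ∈ R, ¬ Relation.ReflTransGen A.T w y :=
    fun y hy h => hwu (h.trans (hRmem y hy).2)
  have huv : u ≠ v := by rintro rfl; exact hwu hwv
  by_cases hQR : ∃ x, x ∈ Q ∧ x ∈ R
  · -- case 2: Q meets the tree path z → u at x
    obtain ⟨x, hxQ, hxR⟩ := hQR
    have hxw : x ≠ w := fun h => hRw x hxR (h ▸ Relation.ReflTransGen.refl)
    have hxz : x ≠ z := by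
      rintro rfl
      exact hszne (hPQ x hzP hxQ).symm
    have hzx : Relation.ReflTransGen A.T z x := (hRmem x hxR).1
    obtain ⟨p, hp, hpQ, hpreach, hwp'⟩ := Aux.dipath_prefix hQ hxQ
    have hwp : w ∉ p := hwp' hxw
    obtain ⟨X, hX, hXmem⟩ := Aux.tree_path hG A.sub (hRmem x hxR).2
    have hXG : IsDipath G X x u := ⟨hX.1.imp (fun a b h => A.sub h), hX.2.1, hX.2.2.1, hX.2.2.2⟩
    have hpX : ∀ y ∈ p, y ∈ X → y = x := by
      intro y hy hyX
      by_contra hne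
      exact cyc (tg (hXmem y hyX).1) (hpreach y hy) (fun h => hne h.symm)
    obtain ⟨hPu, hPumem⟩ := Aux.dipath_append hp hXG hpX
    have hZG : IsDipath G Z z w := ⟨hZ.1.imp (fun a b h => A.sub h), hZ.2.1, hZ.2.2.1, hZ.2.2.2⟩
    obtain ⟨hPZ, hPZmem⟩ :=
      Aux.dipath_append hP hZG (fun y hy hyZ => FP y hy (hZmem y hyZ).1)
    have hglue : ∀ y ∈ P ++ Z.tail, y ∈ S → y = w := by
      intro y hy hyS
      rcases hPZmem y hy with hyP | hyZ
      · exfalso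
        have hyz : y = z := FP y hyP (hzw.trans (hSmem y hyS).1)
        subst hyz
        exact hzTw (hSmem y hyS).1
      · by_contra hne
        exact cyc (tg (hZmem y hyZ).2) (tg (hSmem y hyS).1) hne
    obtain ⟨hPv, hPvmem⟩ := Aux.dipath_append hPZ hSG hglue
    refine ⟨huv, p ++ X.tail, P ++ Z.tail ++ S.tail, hPu, hPv, ?_⟩
    intro t ht1 ht2
    rcases hPumem t ht1 with htp | htX
    · rcases hPvmem t ht2 with htPZ | htS
      · rcases hPZmem t htPZ with htP | htZ
        · exact hPQ t htP (hpQ t htp)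
        · exact absurd ((FQZ t (hpQ t htp) htZ) ▸ htp) hwp
      · exact absurd ((FQ1 t (hpQ t htp) (hSmem t htS).1) ▸ htp) hwp
    · exfalso
      rcases hPvmem t ht2 with htPZ | htS
      · rcases hPZmem t htPZ with htP | htZ
        · have htz : t = z := FP t htP (hzx.trans (hXmem t htX).1)
          subst htz
          exact cyc (tg (hXmem t htX).1) (tg hzx) hxz
        · by_cases htw : t = w
          · exact hwu (htw ▸ (hXmem t htX).2)
          · by_cases htz : t = z
            · subst htz
              exact cyc (tg (hXmem t htX).1) (tg hzx) hxz
            · apply hnot' t htZ htz htw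
              obtain ⟨M, hM, hMmem⟩ := Aux.tree_path hG A.sub (hXmem t htX).1
              have hMG : IsDipath G M x t :=
                ⟨hM.1.imp (fun a b h => A.sub h), hM.2.1, hM.2.2.1, hM.2.2.2⟩
              have hpM : ∀ y ∈ p, y ∈ M → y = x := by
                intro y hy hyM
                by_contra hne
                exact cyc (tg (hMmem y hyM).1) (hpreach y hy) (fun h => hne h.symm)
              obtain ⟨hPt, hPtmem⟩ := Aux.dipath_append hp hMG hpM
              refine ⟨fun h => htz h.symm, P, p ++ M.tail, hP, hPt, ?_⟩
              intro a ha1 ha2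
              rcases hPtmem a ha2 with hap | haM
              · exact hPQ a ha1 (hpQ a hap)
              · exfalso
                have haz : a = z := FP a ha1 (hzx.trans (hMmem a haM).1)
                subst haz
                exact cyc (tg (hMmem a haM).1) (tg hzx) hxz
      · exact hwu ((hSmem t htS).1.trans (hXmem t htX).2)
  · -- case 1: Q misses the tree path z → u
    push_neg at hQR
    obtain ⟨hPu, hPumem⟩ :=
      Aux.dipath_append hP hRG (fun y hy hyR => FP y hy (hRmem y hyR).1)
    obtain ⟨hQv, hQvmem⟩ :=
      Aux.dipath_append hQ hSG (fun y hy hyS => FQ1 y hy (hSmem y hyS).1)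
    refine ⟨huv, P ++ R.tail, Q ++ S.tail, hPu, hQv, ?_⟩
    intro t ht1 ht2
    rcases hPumem t ht1 with htP | htR
    · rcases hQvmem t ht2 with htQ | htS
      · exact hPQ t htP htQ
      · exfalso
        have htz : t = z := FP t htP (hzw.trans (hSmem t htS).1)
        subst htz
        exact hzTw (hSmem t htS).1
    · exfalso
      rcases hQvmem t ht2 with htQ | htS
      · exact hQR t htQ htR
      · exact hRw t htR (hSmem t htS).1
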